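/- Let x₁, …, x_N be as in the periodic setting, solving the Euler–Lagrange system with zero potential gradient, and assume r ↦ G'(r) r² is nondecreasing on (0, ∞). Then for every p with 0 ≤ p < ∞ and every t ∈ [0, T], Σ_{i=1}^{N} (Rᵢ(t))^p ≤ (Σ_{i=1}^{N} (Rᵢ(0))^p)^{1 − t/T} · (Σ_{i=1}^{N} (Rᵢ(T))^p)^{t/T}; that is, t ↦ Σ_{i=1}^{N} (Rᵢ(t))^p is logarithmically convex on [0, T]. -/

import Mathlib

open Set Finset

/-- Discrete density `Rᵢ(t) = δ/(xᵢ(t) − x_{i−1}(t))`, `δ = 1/N`, periodic indexing by `ℤ`. -/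
noncomputable def Rd (N : ℕ) (x : ℤ → ℝ → ℝ) (i : ℤ) (t : ℝ) : ℝ :=
  ((1 : ℝ) / N) / (x i t - x (i - 1) t)

/-- First derivative of `Rd`. -/
noncomputable def Rd1 (N : ℕ) (x : ℤ → ℝ → ℝ) (i : ℤ) (t : ℝ) : ℝ :=
  -((1 : ℝ) / N * (deriv (x i) t - deriv (x (i - 1)) t)) / (x i t - x (i - 1) t) ^ 2

/-- Second derivative of `Rd`. -/
noncomputable def Rd2 (N : ℕ) (x : ℤ → ℝ → ℝ) (i : ℤ) (t : ℝ) : ℝ :=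
  -((1 : ℝ) / N * (deriv (deriv (x i)) t - deriv (deriv (x (i - 1))) t)) /
      (x i t - x (i - 1) t) ^ 2
    + 2 * ((1 : ℝ) / N) * (deriv (x i) t - deriv (x (i - 1)) t) ^ 2 /
      (x i t - x (i - 1) t) ^ 3

/-- Key algebraic identity used termwise. -/
lemma alg_key (δ Y V A p E W r : ℝ) (hY : Y ≠ 0) (hδ : δ ≠ 0) (hr : r = δ / Y)
    (hW : W ^ 2 = E) :
    (-(δ * A) / Y ^ 2 + 2 * δ * V ^ 2 / Y ^ 3) * p * (E * r)
      + -(δ * V) / Y ^ 2 * p * (-(δ * V) / Y ^ 2 * (p - 1) * E)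
    = (-(δ * V) / Y ^ 2 * p * W) ^ 2
      + p * (E * (δ ^ 2 * V ^ 2 / Y ^ 4))
      - p / δ * (E * r ^ 3 * A) := by
  subst hr
  rw [mul_pow, hW]
  field_simp
  ring

/-- Logarithmic convexity of `t ↦ Σᵢ Rᵢ(t)^p` along solutions of the periodic
Euler–Lagrange system with zero potential gradient, for every `0 ≤ p < ∞`. -/
theorem stmt_3
    (N : ℕ) (hN : 2 ≤ N) (T : ℝ) (hT : 0 < T)
    (x : ℤ → ℝ → ℝ)
    (hper : ∀ i t, x (i + N) t = x i t + 1)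
    (hx : ∀ i, ContDiff ℝ 2 (x i))
    (hord : ∀ i, ∀ t ∈ Icc (0:ℝ) T, x i t < x (i + 1) t)
    (L : ℝ → ℝ) (hL : ContDiff ℝ 2 L)
    (hL'' : ∀ u, 0 < deriv (deriv L) u)
    (G : ℝ → ℝ) (hG : ContDiffOn ℝ 1 G (Ioi 0))
    (hB : MonotoneOn (fun r => deriv G r * r ^ 2) (Ioi 0))
    (hEL : ∀ i, ∀ t ∈ Icc (0:ℝ) T,
      deriv (deriv L) (deriv (x i) t) * deriv (deriv (x i)) t =
        N * (deriv G (Rd N x (i + 1) t) * (Rd N x (i + 1) t) ^ 2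
          - deriv G (Rd N x i t) * (Rd N x i t) ^ 2)) :
    ∀ p : ℝ, 0 ≤ p → ∀ t ∈ Icc (0:ℝ) T,
      ∑ i ∈ Finset.Icc (1:ℤ) (N:ℤ), (Rd N x i t) ^ p ≤
        (∑ i ∈ Finset.Icc (1:ℤ) (N:ℤ), (Rd N x i 0) ^ p) ^ (1 - t / T) *
          (∑ i ∈ Finset.Icc (1:ℤ) (N:ℤ), (Rd N x i T) ^ p) ^ (t / T) := by
  intro p hp t ht
  have hNR : (0:ℝ) < N := by exact_mod_cast (by omega : 0 < N)
  set δ : ℝ := (1:ℝ) / N with hδdef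
  have hδ : 0 < δ := by positivity
  -- first and second derivatives of the trajectories
  have hxd : ∀ i s, HasDerivAt (x i) (deriv (x i) s) s := fun i s =>
    (((hx i).differentiable (by norm_num)) s).hasDerivAt
  have hv1 : ∀ i, ContDiff ℝ 1 (deriv (x i)) := by
    intro i
    have h2 : ContDiff ℝ (1 + 1) (x i) := by norm_num [hx i]
    exact (contDiff_succ_iff_deriv.mp h2).2.2
  have hvd : ∀ i s, HasDerivAt (deriv (x i)) (deriv (deriv (x i)) s) s := fun i s =>
    (((hv1 i).differentiable (by norm_num)) s).hasDerivAt
  -- positivity of the gaps on [0, T]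
  have hy : ∀ (i : ℤ), ∀ s ∈ Icc (0:ℝ) T, 0 < x i s - x (i - 1) s := by
    intro i s hs
    have h := hord (i - 1) s hs
    simp only [sub_add_cancel] at h
    linarith
  have hR : ∀ (i : ℤ), ∀ s ∈ Icc (0:ℝ) T, 0 < Rd N x i s := by
    intro i s hs
    exact div_pos (by positivity) (hy i s hs)
  -- periodicity consequences
  have hxN : ∀ s, x (N:ℤ) s = x 0 s + 1 := fun s => by simpa using hper 0 s
  have hxN1 : ∀ s, x ((N:ℤ) + 1) s = x 1 s + 1 := fun s => by
    have := hper 1 s; rwa [add_comm (1:ℤ) (N:ℤ)] at this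
  have haN : deriv (deriv (x (N:ℤ))) = deriv (deriv (x 0)) := by
    have hxfun : x (N:ℤ) = fun u => x 0 u + 1 := funext hxN
    rw [hxfun]
    have h1 : deriv (fun u => x 0 u + 1) = deriv (x 0) := funext fun u => deriv_add_const 1
    rw [h1]
  have hRN1 : ∀ s, Rd N x ((N:ℤ) + 1) s = Rd N x 1 s := by
    intro s
    unfold Rd
    rw [show ((N:ℤ) + 1 - 1) = (N:ℤ) by ring, hxN1 s, hxN s,
      show ((1:ℤ) - 1) = (0:ℤ) by ring]
    congr 1
    ring
  -- derivatives of Rd and Rd1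
  have hdR : ∀ (i : ℤ), ∀ s ∈ Icc (0:ℝ) T,
      HasDerivAt (fun u => Rd N x i u) (Rd1 N x i s) s := by
    intro i s hs
    have hne : x i s - x (i - 1) s ≠ 0 := (hy i s hs).ne'
    have h := (hasDerivAt_const s ((1:ℝ) / N)).div ((hxd i s).sub (hxd (i - 1) s)) hne
    refine h.congr_deriv ?_
    unfold Rd1
    simp only [Pi.sub_apply]
    field_simp
    ring
  have hdR1 : ∀ (i : ℤ), ∀ s ∈ Icc (0:ℝ) T,
      HasDerivAt (fun u => Rd1 N x i u) (Rd2 N x i s) s := by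
    intro i s hs
    have hne : x i s - x (i - 1) s ≠ 0 := (hy i s hs).ne'
    have hnum : HasDerivAt
        (fun u => -((1:ℝ) / N * (deriv (x i) u - deriv (x (i - 1)) u)))
        (-((1:ℝ) / N * (deriv (deriv (x i)) s - deriv (deriv (x (i - 1))) s))) s :=
      (((hvd i s).sub (hvd (i - 1) s)).const_mul ((1:ℝ) / N)).neg
    have hden : HasDerivAt (fun u => (x i u - x (i - 1) u) ^ 2)
        (2 * (x i s - x (i - 1) s) ^ 1 * (deriv (x i) s - deriv (x (i - 1)) s)) s := by
      exact (((hxd i s).sub (hxd (i - 1) s)).pow 2).congr_deriv (by norm_num)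
    have h := hnum.div hden (pow_ne_zero 2 hne)
    refine h.congr_deriv ?_
    unfold Rd2
    field_simp
    ring
  -- the sums and their derivatives
  set S : ℝ → ℝ := fun s => ∑ i ∈ Finset.Icc (1:ℤ) (N:ℤ), Rd N x i s ^ p with hSdef
  set S1 : ℝ → ℝ := fun s => ∑ i ∈ Finset.Icc (1:ℤ) (N:ℤ),
      Rd1 N x i s * p * Rd N x i s ^ (p - 1) with hS1def
  set S2 : ℝ → ℝ := fun s => ∑ i ∈ Finset.Icc (1:ℤ) (N:ℤ),
      (Rd2 N x i s * p * Rd N x i s ^ (p - 1)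
        + Rd1 N x i s * p * (Rd1 N x i s * (p - 1) * Rd N x i s ^ (p - 2))) with hS2def
  have hdS : ∀ s ∈ Icc (0:ℝ) T, HasDerivAt S (S1 s) s := by
    intro s hs
    simp only [hSdef, hS1def]
    exact HasDerivAt.fun_sum fun i _ =>
      (hdR i s hs).rpow_const (Or.inl (hR i s hs).ne')
  have hdS1 : ∀ s ∈ Icc (0:ℝ) T, HasDerivAt S1 (S2 s) s := by
    intro s hs
    simp only [hS1def, hS2def]
    refine HasDerivAt.fun_sum fun i _ => ?_
    have h1 := (hdR1 i s hs).mul_const p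
    have h2 := (hdR i s hs).rpow_const (p := p - 1) (Or.inl (hR i s hs).ne')
    have h := h1.mul h2
    refine h.congr_deriv ?_
    rw [show p - 1 - 1 = p - 2 by ring]
  have hS0 : ∀ s ∈ Icc (0:ℝ) T, 0 < S s := by
    intro s hs
    refine Finset.sum_pos (fun i _ => Real.rpow_pos_of_pos (hR i s hs) p) ?_
    exact ⟨1, by simp only [Finset.mem_Icc]; constructor <;> [rfl; exact_mod_cast by omega]⟩
  -- Claim C: the crucial dissipation inequality
  have hC : ∀ s ∈ Icc (0:ℝ) T,
      (∑ i ∈ Finset.Icc (1:ℤ) (N:ℤ), Rd N x i s ^ (p + 1)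
        * (deriv (deriv (x i)) s - deriv (deriv (x (i - 1))) s)) ≤ 0 := by
    intro s hs
    have hsum : (∑ i ∈ Finset.Icc (1:ℤ) (N:ℤ), Rd N x i s ^ (p + 1)
          * (deriv (deriv (x i)) s - deriv (deriv (x (i - 1))) s))
        = ∑ i ∈ Finset.Icc (1:ℤ) (N:ℤ),
            (Rd N x i s ^ (p + 1) - Rd N x (i + 1) s ^ (p + 1)) * deriv (deriv (x i)) s := by
      have h2 : (∑ i ∈ Finset.Icc (1:ℤ) (N:ℤ), Rd N x i s ^ (p + 1) * deriv (deriv (x (i - 1))) s)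
          = ∑ i ∈ Finset.Icc (0:ℤ) ((N:ℤ) - 1),
              Rd N x (i + 1) s ^ (p + 1) * deriv (deriv (x i)) s := by
        refine Finset.sum_equiv (Equiv.subRight (1:ℤ)) ?_ ?_
        · intro i; simp only [Finset.mem_Icc, Equiv.subRight_apply]; omega
        · intro i _; simp [sub_add_cancel]
      have e0 : (0:ℤ) ∉ Finset.Icc (1:ℤ) ((N:ℤ) - 1) := by simp
      have eN : (N:ℤ) ∉ Finset.Icc (1:ℤ) ((N:ℤ) - 1) := by
        simp only [Finset.mem_Icc]; omega
      have s1 : Finset.Icc (0:ℤ) ((N:ℤ) - 1) = insert 0 (Finset.Icc 1 ((N:ℤ) - 1)) := by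
        ext j; simp only [Finset.mem_Icc, Finset.mem_insert]; omega
      have s2 : Finset.Icc (1:ℤ) (N:ℤ) = insert (N:ℤ) (Finset.Icc 1 ((N:ℤ) - 1)) := by
        ext j; simp only [Finset.mem_Icc, Finset.mem_insert]; omega
      have hc0 : deriv (deriv (x (0:ℤ))) s = deriv (deriv (x (N:ℤ))) s := by rw [haN]
      have hw1 : Rd N x (1:ℤ) s ^ (p + 1) = Rd N x ((N:ℤ) + 1) s ^ (p + 1) := by
        rw [hRN1 s]
      calc (∑ i ∈ Finset.Icc (1:ℤ) (N:ℤ), Rd N x i s ^ (p + 1)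
            * (deriv (deriv (x i)) s - deriv (deriv (x (i - 1))) s))
          = (∑ i ∈ Finset.Icc (1:ℤ) (N:ℤ), Rd N x i s ^ (p + 1) * deriv (deriv (x i)) s)
            - ∑ i ∈ Finset.Icc (0:ℤ) ((N:ℤ) - 1),
                Rd N x (i + 1) s ^ (p + 1) * deriv (deriv (x i)) s := by
            rw [← h2, ← Finset.sum_sub_distrib]
            exact Finset.sum_congr rfl fun i _ => by ring
        _ = ((Rd N x (N:ℤ) s ^ (p + 1) * deriv (deriv (x (N:ℤ))) s)
              + ∑ i ∈ Finset.Icc (1:ℤ) ((N:ℤ) - 1), Rd N x i s ^ (p + 1) * deriv (deriv (x i)) s)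
            - ((Rd N x ((0:ℤ) + 1) s ^ (p + 1) * deriv (deriv (x (0:ℤ))) s)
              + ∑ i ∈ Finset.Icc (1:ℤ) ((N:ℤ) - 1),
                  Rd N x (i + 1) s ^ (p + 1) * deriv (deriv (x i)) s) := by
            rw [s2, s1, Finset.sum_insert eN, Finset.sum_insert e0]
        _ = (∑ i ∈ Finset.Icc (1:ℤ) ((N:ℤ) - 1),
              (Rd N x i s ^ (p + 1) - Rd N x (i + 1) s ^ (p + 1)) * deriv (deriv (x i)) s)
            + (Rd N x (N:ℤ) s ^ (p + 1) - Rd N x ((N:ℤ) + 1) s ^ (p + 1))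
              * deriv (deriv (x (N:ℤ))) s := by
            rw [show ((0:ℤ) + 1) = (1:ℤ) by ring, hc0, hw1,
              show (∑ i ∈ Finset.Icc (1:ℤ) ((N:ℤ) - 1),
                (Rd N x i s ^ (p + 1) - Rd N x (i + 1) s ^ (p + 1)) * deriv (deriv (x i)) s)
                = (∑ i ∈ Finset.Icc (1:ℤ) ((N:ℤ) - 1),
                    Rd N x i s ^ (p + 1) * deriv (deriv (x i)) s)
                  - ∑ i ∈ Finset.Icc (1:ℤ) ((N:ℤ) - 1),
                    Rd N x (i + 1) s ^ (p + 1) * deriv (deriv (x i)) s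
                from by
                  rw [← Finset.sum_sub_distrib]
                  exact Finset.sum_congr rfl fun i _ => by ring]
            ring
        _ = ∑ i ∈ Finset.Icc (1:ℤ) (N:ℤ),
              (Rd N x i s ^ (p + 1) - Rd N x (i + 1) s ^ (p + 1)) * deriv (deriv (x i)) s := by
            rw [s2, Finset.sum_insert eN]
            ring
    rw [hsum]
    refine Finset.sum_nonpos fun i _ => ?_
    have hl : 0 < deriv (deriv L) (deriv (x i) s) := hL'' _
    have hel := hEL i s hs
    have hc : deriv (deriv (x i)) s
        = (N:ℝ) * (deriv G (Rd N x (i + 1) s) * Rd N x (i + 1) s ^ 2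
            - deriv G (Rd N x i s) * Rd N x i s ^ 2) / deriv (deriv L) (deriv (x i) s) := by
      rw [eq_div_iff hl.ne']
      linarith [hel]
    rw [hc]
    rcases le_total (Rd N x i s) (Rd N x (i + 1) s) with hle | hle
    · have hbd : deriv G (Rd N x i s) * Rd N x i s ^ 2
          ≤ deriv G (Rd N x (i + 1) s) * Rd N x (i + 1) s ^ 2 :=
        hB (hR i s hs) (hR (i + 1) s hs) hle
      have hw : Rd N x i s ^ (p + 1) ≤ Rd N x (i + 1) s ^ (p + 1) :=
        Real.rpow_le_rpow (hR i s hs).le hle (by linarith)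
      have hnum : (0:ℝ) ≤ (N:ℝ) * (deriv G (Rd N x (i + 1) s) * Rd N x (i + 1) s ^ 2
          - deriv G (Rd N x i s) * Rd N x i s ^ 2) / deriv (deriv L) (deriv (x i) s) :=
        div_nonneg (mul_nonneg hNR.le (by linarith)) hl.le
      exact mul_nonpos_iff.mpr (Or.inr ⟨by linarith, hnum⟩)
    · have hbd : deriv G (Rd N x (i + 1) s) * Rd N x (i + 1) s ^ 2
          ≤ deriv G (Rd N x i s) * Rd N x i s ^ 2 :=
        hB (hR (i + 1) s hs) (hR i s hs) hle
      have hw : Rd N x (i + 1) s ^ (p + 1) ≤ Rd N x i s ^ (p + 1) :=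
        Real.rpow_le_rpow (hR (i + 1) s hs).le hle (by linarith)
      have hnum : (N:ℝ) * (deriv G (Rd N x (i + 1) s) * Rd N x (i + 1) s ^ 2
          - deriv G (Rd N x i s) * Rd N x i s ^ 2) / deriv (deriv L) (deriv (x i) s) ≤ 0 :=
        div_nonpos_iff.mpr (Or.inr ⟨by nlinarith, hl.le⟩)
      exact mul_nonpos_iff.mpr (Or.inl ⟨by linarith, hnum⟩)
  -- the core inequality S1² ≤ S2 · S
  have hcore : ∀ s ∈ Icc (0:ℝ) T, S1 s ^ 2 ≤ S2 s * S s := by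
    intro s hs
    -- Cauchy–Schwarz
    have hCS : S1 s ^ 2 ≤ S s * ∑ i ∈ Finset.Icc (1:ℤ) (N:ℤ),
        (Rd1 N x i s * p * Rd N x i s ^ (p / 2 - 1)) ^ 2 := by
      have h := Finset.sum_mul_sq_le_sq_mul_sq (Finset.Icc (1:ℤ) (N:ℤ))
        (fun i => Rd N x i s ^ (p / 2))
        (fun i => Rd1 N x i s * p * Rd N x i s ^ (p / 2 - 1))
      have e1 : S1 s = ∑ i ∈ Finset.Icc (1:ℤ) (N:ℤ),
          Rd N x i s ^ (p / 2) * (Rd1 N x i s * p * Rd N x i s ^ (p / 2 - 1)) := by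
        simp only [hS1def]
        refine Finset.sum_congr rfl fun i _ => ?_
        have hsplit : Rd N x i s ^ (p - 1)
            = Rd N x i s ^ (p / 2) * Rd N x i s ^ (p / 2 - 1) := by
          rw [← Real.rpow_add (hR i s hs)]
          congr 1; ring
        rw [hsplit]; ring
      have e2 : (∑ i ∈ Finset.Icc (1:ℤ) (N:ℤ), (Rd N x i s ^ (p / 2)) ^ 2) = S s := by
        simp only [hSdef]
        refine Finset.sum_congr rfl fun i _ => ?_
        rw [pow_two, ← Real.rpow_add (hR i s hs)]
        congr 1; ring
      calc S1 s ^ 2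
          = (∑ i ∈ Finset.Icc (1:ℤ) (N:ℤ),
              Rd N x i s ^ (p / 2) * (Rd1 N x i s * p * Rd N x i s ^ (p / 2 - 1))) ^ 2 := by
            rw [e1]
        _ ≤ (∑ i ∈ Finset.Icc (1:ℤ) (N:ℤ), (Rd N x i s ^ (p / 2)) ^ 2)
            * ∑ i ∈ Finset.Icc (1:ℤ) (N:ℤ),
                (Rd1 N x i s * p * Rd N x i s ^ (p / 2 - 1)) ^ 2 := h
        _ = S s * ∑ i ∈ Finset.Icc (1:ℤ) (N:ℤ),
                (Rd1 N x i s * p * Rd N x i s ^ (p / 2 - 1)) ^ 2 := by rw [e2]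
    -- termwise identity
    have hid : ∀ i ∈ Finset.Icc (1:ℤ) (N:ℤ),
        Rd2 N x i s * p * Rd N x i s ^ (p - 1)
          + Rd1 N x i s * p * (Rd1 N x i s * (p - 1) * Rd N x i s ^ (p - 2))
        = (Rd1 N x i s * p * Rd N x i s ^ (p / 2 - 1)) ^ 2
          + p * (Rd N x i s ^ (p - 2)
              * (δ ^ 2 * (deriv (x i) s - deriv (x (i - 1)) s) ^ 2 / (x i s - x (i - 1) s) ^ 4))
          - p / δ * (Rd N x i s ^ (p - 2) * Rd N x i s ^ 3
              * (deriv (deriv (x i)) s - deriv (deriv (x (i - 1))) s)) := by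
      intro i _
      have hYpos := hy i s hs
      have hrpos := hR i s hs
      have hW : (Rd N x i s ^ (p / 2 - 1)) ^ 2 = Rd N x i s ^ (p - 2) := by
        rw [pow_two, ← Real.rpow_add hrpos]
        congr 1; ring
      have hE1 : Rd N x i s ^ (p - 1) = Rd N x i s ^ (p - 2) * Rd N x i s := by
        have h := Real.rpow_add_one hrpos.ne' (p - 2)
        rw [show p - 2 + 1 = p - 1 by ring] at h
        exact h
      have hRd : Rd N x i s = δ / (x i s - x (i - 1) s) := by rw [hδdef]; rfl
      have hRd1 : Rd1 N x i s
          = -(δ * (deriv (x i) s - deriv (x (i - 1)) s)) / (x i s - x (i - 1) s) ^ 2 := by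
        rw [hδdef]; rfl
      have hRd2 : Rd2 N x i s
          = -(δ * (deriv (deriv (x i)) s - deriv (deriv (x (i - 1))) s))
              / (x i s - x (i - 1) s) ^ 2
            + 2 * δ * (deriv (x i) s - deriv (x (i - 1)) s) ^ 2
              / (x i s - x (i - 1) s) ^ 3 := by
        rw [hδdef]; rfl
      rw [hE1, hRd1, hRd2]
      exact alg_key δ (x i s - x (i - 1) s)
        (deriv (x i) s - deriv (x (i - 1)) s)
        (deriv (deriv (x i)) s - deriv (deriv (x (i - 1))) s)
        p (Rd N x i s ^ (p - 2)) (Rd N x i s ^ (p / 2 - 1)) (Rd N x i s)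
        hYpos.ne' hδ.ne' hRd hW
    -- split S2
    have hsplit : S2 s = (∑ i ∈ Finset.Icc (1:ℤ) (N:ℤ),
          (Rd1 N x i s * p * Rd N x i s ^ (p / 2 - 1)) ^ 2)
        + p * (∑ i ∈ Finset.Icc (1:ℤ) (N:ℤ), Rd N x i s ^ (p - 2)
            * (δ ^ 2 * (deriv (x i) s - deriv (x (i - 1)) s) ^ 2 / (x i s - x (i - 1) s) ^ 4))
        - p / δ * (∑ i ∈ Finset.Icc (1:ℤ) (N:ℤ), Rd N x i s ^ (p - 2) * Rd N x i s ^ 3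
            * (deriv (deriv (x i)) s - deriv (deriv (x (i - 1))) s)) := by
      simp only [hS2def]
      rw [Finset.sum_congr rfl hid, Finset.sum_sub_distrib, Finset.sum_add_distrib,
        ← Finset.mul_sum, ← Finset.mul_sum]
    have hQ : (∑ i ∈ Finset.Icc (1:ℤ) (N:ℤ), Rd N x i s ^ (p - 2) * Rd N x i s ^ 3
        * (deriv (deriv (x i)) s - deriv (deriv (x (i - 1))) s)) ≤ 0 := by
      have heq : (∑ i ∈ Finset.Icc (1:ℤ) (N:ℤ), Rd N x i s ^ (p - 2) * Rd N x i s ^ 3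
            * (deriv (deriv (x i)) s - deriv (deriv (x (i - 1))) s))
          = ∑ i ∈ Finset.Icc (1:ℤ) (N:ℤ), Rd N x i s ^ (p + 1)
            * (deriv (deriv (x i)) s - deriv (deriv (x (i - 1))) s) := by
        refine Finset.sum_congr rfl fun i _ => ?_
        have : Rd N x i s ^ (p - 2) * Rd N x i s ^ 3 = Rd N x i s ^ (p + 1) := by
          rw [← Real.rpow_natCast (Rd N x i s) 3, ← Real.rpow_add (hR i s hs)]
          congr 1
          push_cast
          ring
        rw [this]
      rw [heq]; exact hC s hs
    have hP : (0:ℝ) ≤ ∑ i ∈ Finset.Icc (1:ℤ) (N:ℤ), Rd N x i s ^ (p - 2)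
        * (δ ^ 2 * (deriv (x i) s - deriv (x (i - 1)) s) ^ 2 / (x i s - x (i - 1) s) ^ 4) := by
      refine Finset.sum_nonneg fun i _ => ?_
      exact mul_nonneg (Real.rpow_nonneg (hR i s hs).le _) (by positivity)
    have hS2ge : (∑ i ∈ Finset.Icc (1:ℤ) (N:ℤ),
        (Rd1 N x i s * p * Rd N x i s ^ (p / 2 - 1)) ^ 2) ≤ S2 s := by
      rw [hsplit]
      have h1 : (0:ℝ) ≤ p * ∑ i ∈ Finset.Icc (1:ℤ) (N:ℤ), Rd N x i s ^ (p - 2)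
          * (δ ^ 2 * (deriv (x i) s - deriv (x (i - 1)) s) ^ 2
            / (x i s - x (i - 1) s) ^ 4) := mul_nonneg hp hP
      have h2 : p / δ * (∑ i ∈ Finset.Icc (1:ℤ) (N:ℤ), Rd N x i s ^ (p - 2) * Rd N x i s ^ 3
          * (deriv (deriv (x i)) s - deriv (deriv (x (i - 1))) s)) ≤ 0 :=
        mul_nonpos_iff.mpr (Or.inl ⟨div_nonneg hp hδ.le, hQ⟩)
      linarith
    calc S1 s ^ 2 ≤ S s * ∑ i ∈ Finset.Icc (1:ℤ) (N:ℤ),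
          (Rd1 N x i s * p * Rd N x i s ^ (p / 2 - 1)) ^ 2 := hCS
      _ ≤ S s * S2 s := mul_le_mul_of_nonneg_left hS2ge (hS0 s hs).le
      _ = S2 s * S s := mul_comm _ _
  -- log-convexity
  have hFconv : ConvexOn ℝ (Icc (0:ℝ) T) (fun s => Real.log (S s)) := by
    refine convexOn_of_hasDerivWithinAt2_nonneg (convex_Icc 0 T)
      (f' := fun s => S1 s / S s)
      (f'' := fun s => (S2 s * S s - S1 s * S1 s) / S s ^ 2) ?_ ?_ ?_ ?_
    · intro s hs
      exact (((hdS s hs).differentiableAt.continuousAt).log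
        (hS0 s hs).ne').continuousWithinAt
    · rw [interior_Icc]
      intro s hs
      exact (((hdS s (Ioo_subset_Icc_self hs)).log
        (hS0 s (Ioo_subset_Icc_self hs)).ne')).hasDerivWithinAt
    · rw [interior_Icc]
      intro s hs
      have hs' := Ioo_subset_Icc_self hs
      exact ((hdS1 s hs').div (hdS s hs') (hS0 s hs').ne').hasDerivWithinAt
    · rw [interior_Icc]
      intro s hs
      have hs' := Ioo_subset_Icc_self hs
      have h := hcore s hs'
      have hSpos := hS0 s hs'
      apply div_nonneg _ (sq_nonneg _)
      nlinarith
  -- conclude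
  have hb0 : 0 ≤ t / T := div_nonneg ht.1 hT.le
  have hb1 : t / T ≤ 1 := (div_le_one hT).2 ht.2
  have h0mem : (0:ℝ) ∈ Icc (0:ℝ) T := ⟨le_rfl, hT.le⟩
  have hTmem : T ∈ Icc (0:ℝ) T := ⟨hT.le, le_rfl⟩
  have key := hFconv.2 h0mem hTmem (by linarith : (0:ℝ) ≤ 1 - t / T) hb0 (by ring)
  have harg : (1 - t / T) • (0:ℝ) + (t / T) • T = t := by
    simp only [smul_eq_mul]
    field_simp
    ring
  rw [harg] at key
  have hSt := hS0 t ht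
  have hS00 := hS0 0 h0mem
  have hST := hS0 T hTmem
  have final : S t ≤ S 0 ^ (1 - t / T) * S T ^ (t / T) := by
    calc S t = Real.exp (Real.log (S t)) := (Real.exp_log hSt).symm
      _ ≤ Real.exp ((1 - t / T) * Real.log (S 0) + (t / T) * Real.log (S T)) :=
          Real.exp_le_exp.2 key
      _ = S 0 ^ (1 - t / T) * S T ^ (t / T) := by
          rw [Real.exp_add, Real.rpow_def_of_pos hS00, Real.rpow_def_of_pos hST,
            mul_comm (Real.log (S 0)), mul_comm (Real.log (S T))]
  simpa only [hSdef] using final
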